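/- Let S be a set of t (not necessarily edge-disjoint) copies of a dag H with h vertices and m edges, such that the union D(S) of the elements of S has girth k (contains a directed k-cycle) and S is minimal with this property (any proper subset's union has girth > k). Then 2 ≤ t ≤ k, D(S) has at most k·m edges, and D(S) has at most k·h vertices. -/

import Mathlib

open scoped Classical

variable {V VH : Type} [Fintype V] [DecidableEq V] [Fintype VH] [DecidableEq VH]

/-- The edge set of the copy of `H` (with edge set `EH`) given by an injection
`φ` of its vertices into `V`. -/
def copyEdges (EH : Finset (VH × VH)) (φ : VH ↪ V) : Finset (V × V) :=
  EH.image (fun e => (φ e.1, φ e.2))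

/-- The vertex set of the union `D(S)` of a set `S` of copies. -/
def DSverts (S : Finset (VH ↪ V)) : Finset V :=
  S.biUnion (fun φ => Finset.univ.image φ)

/-- The edge set of the union `D(S)`. -/
def DSedges (EH : Finset (VH × VH)) (S : Finset (VH ↪ V)) : Finset (V × V) :=
  S.biUnion (fun φ => copyEdges EH φ)

/-- The list `l` of distinct vertices describes a directed cycle of the digraph
with edge set `E`. -/
def IsCycleList {V : Type} (E : Finset (V × V)) (l : List V) : Prop :=
  2 ≤ l.length ∧ l.Nodup ∧ l.Chain' (fun a b => (a, b) ∈ E) ∧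
    ∀ a b : V, l.head? = some a → l.getLast? = some b → (b, a) ∈ E

/-- The digraph with edge set `E` has a directed cycle of length `k`. -/
def HasCycle {V : Type} (E : Finset (V × V)) (k : ℕ) : Prop :=
  ∃ l : List V, IsCycleList E l ∧ l.length = k

/-- The finset of edges traversed by the cycle described by `l`. -/
noncomputable def cycE {V : Type} [DecidableEq V] (l : List V) : Finset (V × V) :=
  (Finset.univ : Finset (Fin l.length)).image
    (fun i => (l.get i, l.get ⟨(i.1 + 1) % l.length,
      Nat.mod_lt _ (Nat.lt_of_le_of_lt (Nat.zero_le _) i.isLt)⟩))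

lemma cycE_card_le {V : Type} [DecidableEq V] (l : List V) : (cycE l).card ≤ l.length := by
  calc (cycE l).card ≤ (Finset.univ : Finset (Fin l.length)).card := Finset.card_image_le
    _ = l.length := by simp

lemma cycE_subset {V : Type} [DecidableEq V] {E : Finset (V × V)} {l : List V}
    (h : IsCycleList E l) : cycE l ⊆ E := by
  obtain ⟨hlen, hnd, hch, hcl⟩ := h
  have hne : l ≠ [] := by
    intro h; rw [h] at hlen; simp at hlen
  intro p hp
  simp only [cycE, Finset.mem_image, Finset.mem_univ, true_and] at hp
  obtain ⟨i, rfl⟩ := hp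
  rcases Nat.lt_or_ge (i.1 + 1) l.length with hi | hi
  · have := List.isChain_iff_getElem.1 hch i.1 (by omega)
    have hmod : (i.1 + 1) % l.length = i.1 + 1 := Nat.mod_eq_of_lt hi
    convert this using 3 <;> simp [List.get_eq_getElem, hmod]
  · have hieq : i.1 = l.length - 1 := by omega
    have hmod : (i.1 + 1) % l.length = 0 := by
      have h1 : i.1 + 1 = l.length := by omega
      rw [h1, Nat.mod_self]
    have ha : l.head? = some (l.get ⟨0, by omega⟩) := by
      rw [List.head?_eq_head hne]
      simp [List.head_eq_getElem, List.get_eq_getElem]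
    have hb : l.getLast? = some (l.get i) := by
      rw [List.getLast?_eq_getLast hne]
      simp [List.getLast_eq_getElem, List.get_eq_getElem, hieq]
    have := hcl _ _ ha hb
    convert this using 3 <;> (apply Fin.ext; simp [hmod])

lemma cycE_cycle {V : Type} [DecidableEq V] {E : Finset (V × V)} {l : List V}
    (hlen : 2 ≤ l.length) (hnd : l.Nodup) (hsub : cycE l ⊆ E) : IsCycleList E l := by
  have hne : l ≠ [] := by
    intro h; rw [h] at hlen; simp at hlen
  have hmem : ∀ i : Fin l.length,
      (l.get i, l.get ⟨(i.1 + 1) % l.length,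
        Nat.mod_lt _ (Nat.lt_of_le_of_lt (Nat.zero_le _) i.isLt)⟩) ∈ E := by
    intro i
    apply hsub
    simp only [cycE, Finset.mem_image, Finset.mem_univ, true_and]
    exact ⟨i, rfl⟩
  refine ⟨hlen, hnd, ?_, ?_⟩
  · rw [show List.Chain' (fun a b => (a, b) ∈ E) l = List.IsChain (fun a b => (a, b) ∈ E) l from rfl, List.isChain_iff_getElem]
    intro i hi
    have := hmem ⟨i, by omega⟩
    have hmod : (i + 1) % l.length = i + 1 := Nat.mod_eq_of_lt (by omega)
    convert this using 3 <;> simp [List.get_eq_getElem, hmod]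
  · intro a b ha hb
    have hE := hmem ⟨l.length - 1, by omega⟩
    have hmod : (l.length - 1 + 1) % l.length = 0 := by
      have h1 : l.length - 1 + 1 = l.length := by omega
      rw [h1, Nat.mod_self]
    rw [List.head?_eq_head hne] at ha
    rw [List.getLast?_eq_getLast hne] at hb
    have ha' : a = l.head hne := (Option.some_inj.1 ha).symm
    have hb' : b = l.getLast hne := (Option.some_inj.1 hb).symm
    rw [ha', hb', List.head_eq_getElem, List.getLast_eq_getElem]
    convert hE using 3 <;> simp [List.get_eq_getElem, hmod]

lemma chain'_reflTransGen {α : Type*} {R : α → α → Prop} :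
    ∀ (l : List α), l.Chain' R → ∀ a b, l.head? = some a → l.getLast? = some b →
      Relation.ReflTransGen R a b
  | [] => by intro _ a b ha; simp at ha
  | [x] => by
    intro _ a b ha hb
    simp at ha hb
    subst ha; subst hb; exact Relation.ReflTransGen.refl
  | x :: y :: t => by
    intro hch a b ha hb
    simp only [List.head?_cons, Option.some_inj] at ha
    subst ha
    rw [show List.Chain' R (x :: y :: t) = List.IsChain R (x :: y :: t) from rfl, List.isChain_cons_cons] at hch
    have hb' : (y :: t).getLast? = some b := by
      rw [List.getLast?_cons_cons] at hb
      exact hb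
    exact Relation.ReflTransGen.head hch.1
      (chain'_reflTransGen (y :: t) hch.2 y b (by simp) hb')

/-- A single copy of an acyclic `H` is acyclic. -/
lemma copy_acyclic {V VH : Type} [DecidableEq V] (EH : Finset (VH × VH))
    (hHacyc : ∀ v, ¬ Relation.TransGen (fun a b => (a, b) ∈ EH) v v)
    (φ : VH ↪ V) {x y : V}
    (h : Relation.TransGen (fun a b => (a, b) ∈ copyEdges EH φ) x y) :
    ∃ a b, φ a = x ∧ φ b = y ∧ Relation.TransGen (fun a b => (a, b) ∈ EH) a b := by
  induction h with
  | single h =>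
    simp only [copyEdges, Finset.mem_image] at h
    obtain ⟨e, he, heq⟩ := h
    exact ⟨e.1, e.2, congrArg Prod.fst heq, congrArg Prod.snd heq,
      Relation.TransGen.single he⟩
  | tail _ h ih =>
    obtain ⟨a, b, hax, hby, htg⟩ := ih
    simp only [copyEdges, Finset.mem_image] at h
    obtain ⟨e, he, heq⟩ := h
    have h1 : φ e.1 = φ b := by rw [hby]; exact congrArg Prod.fst heq
    have h2 : e.1 = b := φ.injective h1
    exact ⟨a, e.2, hax, congrArg Prod.snd heq,
      Relation.TransGen.tail htg (h2 ▸ he)⟩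

theorem stmt18 (EH : Finset (VH × VH))
    (hHacyc : ∀ v, ¬ Relation.TransGen (fun a b => (a, b) ∈ EH) v v)
    (S : Finset (VH ↪ V)) (k : ℕ)
    -- the girth of `D(S)` is `k`
    (hgirth : HasCycle (DSedges EH S) k ∧
      ∀ j : ℕ, j < k → ¬ HasCycle (DSedges EH S) j)
    -- minimality: the union of any proper subset has girth greater than `k`
    (hmin : ∀ T : Finset (VH ↪ V), T ⊂ S →
      ∀ j : ℕ, j ≤ k → ¬ HasCycle (DSedges EH T) j) :
    2 ≤ S.card ∧ S.card ≤ k ∧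
      (DSedges EH S).card ≤ k * EH.card ∧
      (DSverts S).card ≤ k * Fintype.card VH := by
  obtain ⟨⟨l, hl, hlk⟩, _⟩ := hgirth
  have hlen2 : 2 ≤ l.length := hl.1
  have hk2 : 2 ≤ k := hlk ▸ hlen2
  have hsub : cycE l ⊆ DSedges EH S := cycE_subset hl
  -- each copy in S privately owns an edge of the cycle
  have hex : ∀ φ ∈ S, ∃ p, p ∈ cycE l ∧ p ∉ DSedges EH (S.erase φ) := by
    intro φ hφ
    by_contra hcon
    push_neg at hcon
    have : IsCycleList (DSedges EH (S.erase φ)) l :=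
      cycE_cycle hlen2 hl.2.1 (fun p hp => hcon p hp)
    exact hmin (S.erase φ) (Finset.erase_ssubset hφ) k le_rfl ⟨l, this, hlk⟩
  have hlne : l ≠ [] := by intro h; rw [h] at hlen2; simp at hlen2
  have hex' : ∀ φ : VH ↪ V, ∃ p : V × V,
      φ ∈ S → p ∈ cycE l ∧ p ∉ DSedges EH (S.erase φ) := by
    intro φ
    by_cases hφ : φ ∈ S
    · obtain ⟨p, hp⟩ := hex φ hφ
      exact ⟨p, fun _ => hp⟩
    · exact ⟨(l.head hlne, l.head hlne), fun h => absurd h hφ⟩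
  choose f hf using hex'
  have hf1 : ∀ φ ∈ S, f φ ∈ cycE l := fun φ hφ => (hf φ hφ).1
  have hf2 : ∀ φ ∈ S, f φ ∉ DSedges EH (S.erase φ) := fun φ hφ => (hf φ hφ).2
  -- f is injective on S
  have hinj : Set.InjOn f (S : Set (VH ↪ V)) := by
    intro φ hφ ψ hψ heq
    by_contra hne
    have hφS : φ ∈ S := hφ
    have hψS : ψ ∈ S := hψ
    -- f φ ∈ copyEdges EH φ
    have hmem : ∀ χ ∈ S, f χ ∈ copyEdges EH χ := by
      intro χ hχ
      have h1 : f χ ∈ DSedges EH S := hsub (hf1 χ hχ)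
      simp only [DSedges, Finset.mem_biUnion] at h1
      obtain ⟨ρ, hρ, hfρ⟩ := h1
      rcases eq_or_ne ρ χ with rfl | hne'
      · exact hfρ
      · exact absurd (Finset.mem_biUnion.2 ⟨ρ, Finset.mem_erase.2 ⟨hne', hρ⟩, hfρ⟩)
          (hf2 χ hχ)
    have : f ψ ∈ DSedges EH (S.erase ψ) := by
      refine Finset.mem_biUnion.2 ⟨φ, Finset.mem_erase.2 ⟨hne, hφS⟩, ?_⟩
      rw [← heq]; exact hmem φ hφS
    exact hf2 ψ hψS this
  have hcardle : S.card ≤ k := by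
    calc S.card ≤ (cycE l).card := Finset.card_le_card_of_injOn f hf1 hinj
      _ ≤ l.length := cycE_card_le l
      _ = k := hlk
  -- S is nonempty
  have hSne : S.Nonempty := by
    have : (l.get ⟨0, by omega⟩, l.get ⟨1 % l.length, by
        exact Nat.mod_lt _ (by omega)⟩) ∈ DSedges EH S := by
      apply hsub
      simp only [cycE, Finset.mem_image, Finset.mem_univ, true_and]
      exact ⟨⟨0, by omega⟩, rfl⟩
    simp only [DSedges, Finset.mem_biUnion] at this
    obtain ⟨φ, hφ, _⟩ := this
    exact ⟨φ, hφ⟩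
  -- S has at least two elements
  have h2le : 2 ≤ S.card := by
    rcases Nat.lt_or_ge S.card 2 with h | h
    · exfalso
      interval_cases hc : S.card
      · exact absurd (Finset.card_eq_zero.1 hc ▸ hSne) (by simp)
      · obtain ⟨φ, rfl⟩ := Finset.card_eq_one.1 hc
        have hE : DSedges EH {φ} = copyEdges EH φ := Finset.singleton_biUnion
        rw [hE] at hl
        obtain ⟨hlen, hnd, hch, hcl⟩ := hl
        have hne : l ≠ [] := by intro h; rw [h] at hlen; simp at hlen
        have ha : l.head? = some (l.head hne) := List.head?_eq_head hne
        have hb : l.getLast? = some (l.getLast hne) := List.getLast?_eq_getLast hne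
        have hrt : Relation.ReflTransGen (fun a b => (a, b) ∈ copyEdges EH φ)
            (l.head hne) (l.getLast hne) := chain'_reflTransGen l hch _ _ ha hb
        have htg : Relation.TransGen (fun a b => (a, b) ∈ copyEdges EH φ)
            (l.head hne) (l.head hne) :=
          Relation.TransGen.tail' hrt (hcl _ _ ha hb)
        obtain ⟨a, b, hax, hbx, htgH⟩ := copy_acyclic EH hHacyc φ htg
        have : a = b := φ.injective (by rw [hax, hbx])
        exact hHacyc a (this ▸ htgH)
    · exact h
  refine ⟨h2le, hcardle, ?_, ?_⟩
  · calc (DSedges EH S).card ≤ ∑ φ ∈ S, (copyEdges EH φ).card := Finset.card_biUnion_le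
      _ ≤ S.card * EH.card := by
          rw [← smul_eq_mul]
          exact Finset.sum_le_card_nsmul S _ _ (fun φ _ => Finset.card_image_le)
      _ ≤ k * EH.card := Nat.mul_le_mul_right _ hcardle
  · calc (DSverts S).card ≤ ∑ φ ∈ S, (Finset.univ.image φ).card := Finset.card_biUnion_le
      _ ≤ S.card * Fintype.card VH := by
          rw [← smul_eq_mul]
          exact Finset.sum_le_card_nsmul S _ _ (fun φ _ => by
            simpa using (Finset.card_image_le (s := (Finset.univ : Finset VH)) (f := φ)))
      _ ≤ k * Fintype.card VH := Nat.mul_le_mul_right _ hcardle
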